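/- Let α ∈ (0,1), θ = α/(1−α), and let u : [0,∞) → ℝ be continuously differentiable with |u(t)| ≤ M e^{wt} and |u′(t)| ≤ M e^{wt} for some M > 0, w ≥ 0. Then for every λ > max(w, 0), ∫₀^∞ e^{−λx} [(1/(1−α)) ∫₀^x u′(τ) e^{−θ(x−τ)} dτ] dx = (1/(α + λ(1−α))) (λ ũ(λ) − u(0)), where ũ(λ) = ∫₀^∞ e^{−λx} u(x) dx. -/

import Mathlib

open MeasureTheory Set Real intervalIntegral Filter
open scoped Topology

lemma my_integral_exp_mul (c : ℝ) (hc : c ≠ 0) (x : ℝ) :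
    ∫ τ in (0:ℝ)..x, Real.exp (c * τ) = (Real.exp (c * x) - 1) / c := by
  have h : ∀ τ ∈ Set.uIcc (0:ℝ) x,
      HasDerivAt (fun t => Real.exp (c * t) / c) (Real.exp (c * τ)) τ := by
    intro τ _
    have := (((hasDerivAt_id τ).const_mul c).exp).div_const c
    refine this.congr_deriv ?_
    simp [hc]
  rw [intervalIntegral.integral_eq_sub_of_hasDerivAt h
    ((Real.continuous_exp.comp (continuous_const.mul continuous_id)).intervalIntegrable _ _)]
  simp only [mul_zero, Real.exp_zero]
  ring

/-- Laplace transform of the Caputo–Fabrizio operator (`M(α)=1`, `a=0`): for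
`u ∈ C¹` of exponential order `w` (with derivative of exponential order `w`),
`θ = α/(1−α)` and `λ > max(w,0)`,
`∫₀^∞ e^{−λx} [(1/(1−α)) ∫₀^x u′(τ) e^{−θ(x−τ)} dτ] dx
   = (λ ũ(λ) − u(0)) / (α + λ(1−α))`. -/
theorem stmt_14 (α θ : ℝ) (hα : α ∈ Ioo (0:ℝ) 1) (hθ : θ = α / (1 - α))
    (M w : ℝ) (hM : 0 < M) (hw : 0 ≤ w)
    (u : ℝ → ℝ) (hu : ContDiff ℝ 1 u)
    (hub : ∀ t : ℝ, 0 ≤ t → |u t| ≤ M * Real.exp (w * t))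
    (hu'b : ∀ t : ℝ, 0 ≤ t → |deriv u t| ≤ M * Real.exp (w * t)) :
    ∀ l : ℝ, max w 0 < l →
      ∫ x in Ioi (0:ℝ),
          Real.exp (-l * x) *
            ((1 / (1 - α)) * ∫ τ in (0:ℝ)..x, deriv u τ * Real.exp (-θ * (x - τ)))
        = (1 / (α + l * (1 - α))) *
            (l * (∫ x in Ioi (0:ℝ), Real.exp (-l * x) * u x) - u 0) := by
  obtain ⟨hα0, hα1⟩ := hα
  have hβ : (0:ℝ) < 1 - α := by linarith
  intro l hl
  have hlw : w < l := lt_of_le_of_lt (le_max_left _ _) hl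
  have hl0 : 0 < l := lt_of_le_of_lt (le_max_right _ _) hl
  have hθ0 : 0 < θ := by rw [hθ]; positivity
  have hk : 0 < l + θ := by linarith
  have hwθ : 0 < w + θ := by linarith
  have hcu : Continuous u := hu.continuous
  have hcu' : Continuous (deriv u) := hu.continuous_deriv le_rfl
  -- integrability helper
  have key : ∀ (f : ℝ → ℝ) (C : ℝ), Continuous f →
      (∀ x, 0 ≤ x → |f x| ≤ C * Real.exp ((w - l) * x)) → IntegrableOn f (Ioi 0) := by
    intro f C hf hb
    have hint : IntegrableOn (fun x => C * Real.exp (-(l - w) * x)) (Ioi 0) :=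
      (exp_neg_integrableOn_Ioi 0 (by linarith : (0:ℝ) < l - w)).const_mul C
    refine Integrable.mono' hint hf.aestronglyMeasurable ?_
    filter_upwards [ae_restrict_mem measurableSet_Ioi] with x hx
    have := hb x (le_of_lt hx)
    simpa [Real.norm_eq_abs, neg_sub] using this
  -- tendsto helper
  have tkey : ∀ (f : ℝ → ℝ) (C : ℝ),
      (∀ x, 0 ≤ x → |f x| ≤ C * Real.exp ((w - l) * x)) → Tendsto f atTop (𝓝 0) := by
    intro f C hb
    have h1 : Tendsto (fun x => C * Real.exp ((w - l) * x)) atTop (𝓝 (C * 0)) := by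
      refine Tendsto.const_mul C ?_
      exact Real.tendsto_exp_atBot.comp
        (tendsto_id.const_mul_atTop_of_neg (by linarith : w - l < 0))
    rw [mul_zero] at h1
    refine squeeze_zero_norm' ?_ h1
    filter_upwards [eventually_ge_atTop (0:ℝ)] with x hx
    simpa [Real.norm_eq_abs] using hb x hx
  -- basic integrabilities
  have hInt_u : IntegrableOn (fun x => Real.exp (-l * x) * u x) (Ioi 0) := by
    refine key _ M (Real.continuous_exp.comp (continuous_const.mul continuous_id) |>.mul hcu) ?_
    intro x hx
    rw [abs_mul, Real.abs_exp]
    calc Real.exp (-l * x) * |u x| ≤ Real.exp (-l * x) * (M * Real.exp (w * x)) := by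
          exact mul_le_mul_of_nonneg_left (hub x hx) (Real.exp_pos _).le
      _ = M * Real.exp ((w - l) * x) := by
          rw [mul_left_comm, ← Real.exp_add, show -l * x + w * x = (w - l) * x by ring]
  have hInt_u' : IntegrableOn (fun x => Real.exp (-l * x) * deriv u x) (Ioi 0) := by
    refine key _ M (Real.continuous_exp.comp (continuous_const.mul continuous_id) |>.mul hcu') ?_
    intro x hx
    rw [abs_mul, Real.abs_exp]
    calc Real.exp (-l * x) * |deriv u x| ≤ Real.exp (-l * x) * (M * Real.exp (w * x)) := by
          exact mul_le_mul_of_nonneg_left (hu'b x hx) (Real.exp_pos _).le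
      _ = M * Real.exp ((w - l) * x) := by
          rw [mul_left_comm, ← Real.exp_add, show -l * x + w * x = (w - l) * x by ring]
  -- Step A: Laplace transform of the derivative
  have hA : ∫ x in Ioi (0:ℝ), Real.exp (-l * x) * deriv u x
      = l * (∫ x in Ioi (0:ℝ), Real.exp (-l * x) * u x) - u 0 := by
    have hderiv : ∀ x ∈ Ici (0:ℝ), HasDerivAt (fun x => Real.exp (-l * x) * u x)
        (Real.exp (-l * x) * deriv u x - l * (Real.exp (-l * x) * u x)) x := by
      intro x _
      have h1 : HasDerivAt (fun x => Real.exp (-l * x)) (Real.exp (-l * x) * (-l)) x := by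
        simpa using ((hasDerivAt_id x).const_mul (-l)).exp
      have h2 : HasDerivAt u (deriv u x) x :=
        (hu.differentiable one_ne_zero).differentiableAt.hasDerivAt
      have := h1.mul h2
      refine this.congr_deriv ?_
      ring
    have hint : IntegrableOn (fun x => Real.exp (-l * x) * deriv u x
        - l * (Real.exp (-l * x) * u x)) (Ioi 0) := hInt_u'.sub (hInt_u.const_mul l)
    have htend : Tendsto (fun x => Real.exp (-l * x) * u x) atTop (𝓝 0) := by
      refine tkey _ M ?_
      intro x hx
      rw [abs_mul, Real.abs_exp]
      calc Real.exp (-l * x) * |u x| ≤ Real.exp (-l * x) * (M * Real.exp (w * x)) := by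
            exact mul_le_mul_of_nonneg_left (hub x hx) (Real.exp_pos _).le
        _ = M * Real.exp ((w - l) * x) := by
          rw [mul_left_comm, ← Real.exp_add, show -l * x + w * x = (w - l) * x by ring]
    have := integral_Ioi_of_hasDerivAt_of_tendsto' hderiv hint htend
    rw [MeasureTheory.integral_sub hInt_u' (hInt_u.const_mul l),
      MeasureTheory.integral_const_mul] at this
    rw [show -l * (0:ℝ) = 0 by ring, Real.exp_zero, one_mul, zero_sub] at this
    linarith [this]
  -- Step B
  set G : ℝ → ℝ := fun x => ∫ τ in (0:ℝ)..x, deriv u τ * Real.exp (θ * τ) with hG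
  have hGd : ∀ x : ℝ, HasDerivAt G (deriv u x * Real.exp (θ * x)) x := by
    intro x
    have hc : Continuous (fun τ => deriv u τ * Real.exp (θ * τ)) :=
      hcu'.mul (Real.continuous_exp.comp (continuous_const.mul continuous_id))
    exact intervalIntegral.integral_hasDerivAt_right (hc.intervalIntegrable _ _)
      (hc.stronglyMeasurableAtFilter _ _) hc.continuousAt
  have hGcont : Continuous G := by
    rw [continuous_iff_continuousAt]; exact fun x => (hGd x).continuousAt
  have hGb : ∀ x, 0 ≤ x → |G x| ≤ (M / (w + θ)) * Real.exp ((w + θ) * x) := by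
    intro x hx
    have h1 : |G x| ≤ ∫ τ in (0:ℝ)..x, |deriv u τ * Real.exp (θ * τ)| :=
      intervalIntegral.abs_integral_le_integral_abs hx
    have h2 : ∫ τ in (0:ℝ)..x, |deriv u τ * Real.exp (θ * τ)|
        ≤ ∫ τ in (0:ℝ)..x, M * Real.exp ((w + θ) * τ) := by
      refine intervalIntegral.integral_mono_on hx ?_ ?_ ?_
      · exact ((hcu'.mul (Real.continuous_exp.comp
          (continuous_const.mul continuous_id))).abs).intervalIntegrable _ _
      · exact (continuous_const.mul (Real.continuous_exp.comp
          (continuous_const.mul continuous_id))).intervalIntegrable _ _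
      · intro τ hτ
        rw [abs_mul, Real.abs_exp]
        calc |deriv u τ| * Real.exp (θ * τ) ≤ (M * Real.exp (w * τ)) * Real.exp (θ * τ) :=
              mul_le_mul_of_nonneg_right (hu'b τ hτ.1) (Real.exp_pos _).le
          _ = M * Real.exp ((w + θ) * τ) := by
              rw [mul_assoc, ← Real.exp_add, show w * τ + θ * τ = (w + θ) * τ by ring]
    have h3 : ∫ τ in (0:ℝ)..x, M * Real.exp ((w + θ) * τ)
        = M * ((Real.exp ((w + θ) * x) - 1) / (w + θ)) := by
      rw [intervalIntegral.integral_const_mul, my_integral_exp_mul _ hwθ.ne']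
    have h4 : M * ((Real.exp ((w + θ) * x) - 1) / (w + θ))
        ≤ (M / (w + θ)) * Real.exp ((w + θ) * x) := by
      rw [div_mul_eq_mul_div, mul_div_assoc]
      gcongr
      linarith [Real.exp_pos ((w + θ) * x)]
    linarith
  have hIntEG : IntegrableOn (fun x => Real.exp (-(l + θ) * x) * G x) (Ioi 0) := by
    refine key _ (M / (w + θ))
      ((Real.continuous_exp.comp (continuous_const.mul continuous_id)).mul hGcont) ?_
    intro x hx
    rw [abs_mul, Real.abs_exp]
    calc Real.exp (-(l + θ) * x) * |G x|
        ≤ Real.exp (-(l + θ) * x) * ((M / (w + θ)) * Real.exp ((w + θ) * x)) :=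
          mul_le_mul_of_nonneg_left (hGb x hx) (Real.exp_pos _).le
      _ = (M / (w + θ)) * Real.exp ((w - l) * x) := by
          rw [mul_left_comm, ← Real.exp_add, show -(l + θ) * x + (w + θ) * x = (w - l) * x by ring]
  have hB : ∫ x in Ioi (0:ℝ), Real.exp (-(l + θ) * x) * G x
      = (1 / (l + θ)) * (l * (∫ x in Ioi (0:ℝ), Real.exp (-l * x) * u x) - u 0) := by
    have hderiv : ∀ x ∈ Ici (0:ℝ),
        HasDerivAt (fun x => -(Real.exp (-(l + θ) * x) * G x) / (l + θ))
          (Real.exp (-(l + θ) * x) * G x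
            - (1 / (l + θ)) * (Real.exp (-l * x) * deriv u x)) x := by
      intro x _
      have h1 : HasDerivAt (fun x => Real.exp (-(l + θ) * x))
          (Real.exp (-(l + θ) * x) * (-(l + θ))) x := by
        simpa using ((hasDerivAt_id x).const_mul (-(l + θ))).exp
      have := ((h1.mul (hGd x)).neg).div_const (l + θ)
      refine this.congr_deriv ?_
      rw [show Real.exp (-l * x) = Real.exp (-(l + θ) * x) * Real.exp (θ * x) by
        rw [← Real.exp_add]; congr 1; ring]
      field_simp
      ring
    have hint : IntegrableOn (fun x => Real.exp (-(l + θ) * x) * G x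
        - (1 / (l + θ)) * (Real.exp (-l * x) * deriv u x)) (Ioi 0) :=
      hIntEG.sub (hInt_u'.const_mul _)
    have htend : Tendsto (fun x => -(Real.exp (-(l + θ) * x) * G x) / (l + θ)) atTop (𝓝 0) := by
      refine tkey _ (M / ((w + θ) * (l + θ))) ?_
      intro x hx
      rw [abs_div, abs_neg, abs_mul, Real.abs_exp, abs_of_pos hk]
      rw [div_le_iff₀ hk]
      calc Real.exp (-(l + θ) * x) * |G x|
          ≤ Real.exp (-(l + θ) * x) * ((M / (w + θ)) * Real.exp ((w + θ) * x)) :=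
            mul_le_mul_of_nonneg_left (hGb x hx) (Real.exp_pos _).le
        _ = M / ((w + θ) * (l + θ)) * Real.exp ((w - l) * x) * (l + θ) := by
            rw [mul_left_comm, ← Real.exp_add,
              show -(l + θ) * x + (w + θ) * x = (w - l) * x by ring]
            field_simp
    have := integral_Ioi_of_hasDerivAt_of_tendsto' hderiv hint htend
    rw [MeasureTheory.integral_sub hIntEG (hInt_u'.const_mul _),
      MeasureTheory.integral_const_mul] at this
    have hG0 : G 0 = 0 := by simp [hG]
    rw [hG0] at this
    simp only [mul_zero, neg_zero, zero_div, sub_zero] at this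
    rw [hA] at this
    linarith [this]
  -- put everything together
  have hEq : ∀ x : ℝ, Real.exp (-l * x) *
      ((1 / (1 - α)) * ∫ τ in (0:ℝ)..x, deriv u τ * Real.exp (-θ * (x - τ)))
      = (1 / (1 - α)) * (Real.exp (-(l + θ) * x) * G x) := by
    intro x
    have h1 : ∀ τ : ℝ, deriv u τ * Real.exp (-θ * (x - τ))
        = Real.exp (-θ * x) * (deriv u τ * Real.exp (θ * τ)) := by
      intro τ
      rw [show -θ * (x - τ) = -θ * x + θ * τ by ring, Real.exp_add]
      ring
    simp_rw [h1]
    rw [intervalIntegral.integral_const_mul]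
    rw [show -(l + θ) * x = -l * x + -θ * x by ring, Real.exp_add]
    ring
  simp_rw [hEq]
  rw [MeasureTheory.integral_const_mul, hB]
  have : (1 / (1 - α)) * (1 / (l + θ)) = 1 / (α + l * (1 - α)) := by
    rw [hθ]
    have h2 : α + l * (1 - α) = (1 - α) * (l + α / (1 - α)) := by
      field_simp
      ring
    rw [h2, div_mul_div_comm, one_mul]
  rw [← mul_assoc, this]
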